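/- If σ and τ are distinct permutations of {1,…,p}, then the topological interiors (in ℝ^p) of the simplices K_σ and K_τ are disjoint. -/

import Mathlib

open Set

/-- The vertex `v_k^σ = e_{σ(1)} + ⋯ + e_{σ(k)}` of the simplex `K_σ`
(0-indexed: the sum of `e_{σ(i)}` over the first `k` indices `i`). -/
def cubeVtx (p : ℕ) (σ : Equiv.Perm (Fin p)) (k : ℕ) : Fin p → ℝ :=
  ∑ i ∈ Finset.univ.filter fun i : Fin p => (i : ℕ) < k, Pi.single (σ i) 1

/-- The simplex `K_σ`, the convex hull of the `p+1` points `v_0^σ, …, v_p^σ`. -/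
def Ksimp (p : ℕ) (σ : Equiv.Perm (Fin p)) : Set (Fin p → ℝ) :=
  convexHull ℝ {x | ∃ k ≤ p, x = cubeVtx p σ k}

/-- The unit cube `[0,1]^p`. -/
def unitCube (p : ℕ) : Set (Fin p → ℝ) :=
  {x | ∀ i, x i ∈ Icc (0 : ℝ) 1}

/-- The order cone for σ. -/
def Cset (p : ℕ) (σ : Equiv.Perm (Fin p)) : Set (Fin p → ℝ) :=
  {x | ∀ i j : Fin p, i ≤ j → x (σ j) ≤ x (σ i)}

lemma cubeVtx_apply (p : ℕ) (σ : Equiv.Perm (Fin p)) (k : ℕ) (j : Fin p) :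
    cubeVtx p σ k (σ j) = if (j : ℕ) < k then 1 else 0 := by
  unfold cubeVtx
  rw [Finset.sum_apply]
  have : ∀ i : Fin p, (Pi.single (σ i) 1 : Fin p → ℝ) (σ j) = if j = i then 1 else 0 := by
    intro i
    rw [Pi.single_apply]
    simp [σ.injective.eq_iff]
  simp only [this]
  rw [Finset.sum_ite_eq]
  simp

lemma Ksimp_subset_Cset (p : ℕ) (σ : Equiv.Perm (Fin p)) : Ksimp p σ ⊆ Cset p σ := by
  apply convexHull_min
  · rintro x ⟨k, hk, rfl⟩ i j hij
    rw [cubeVtx_apply, cubeVtx_apply]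
    have hij' : (i : ℕ) ≤ j := hij
    split_ifs with h1 h2
    · norm_num
    · exact absurd (lt_of_le_of_lt hij' h1) h2
    all_goals norm_num
  · intro x hx y hy a b ha hb hab i j hij
    simp only [Pi.add_apply, Pi.smul_apply, smul_eq_mul]
    exact add_le_add (mul_le_mul_of_nonneg_left (hx i j hij) ha)
      (mul_le_mul_of_nonneg_left (hy i j hij) hb)

lemma interior_Cset_strict {p : ℕ} {σ : Equiv.Perm (Fin p)} {x : Fin p → ℝ}
    (hx : x ∈ interior (Cset p σ)) {i j : Fin p} (hij : i < j) :
    x (σ j) < x (σ i) := by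
  rw [mem_interior_iff_mem_nhds, Metric.mem_nhds_iff] at hx
  obtain ⟨ε, hε, hball⟩ := hx
  set v : Fin p → ℝ := Pi.single (σ j) (1:ℝ) - Pi.single (σ i) 1 with hv
  have hvnorm : ‖v‖ ≤ 2 := by
    have h1 : ‖(Pi.single (σ j) 1 : Fin p → ℝ)‖ ≤ 1 := by
      apply pi_norm_le_iff_of_nonneg zero_le_one |>.2
      intro b; rw [Pi.single_apply]; split_ifs <;> simp
    have h2 : ‖(Pi.single (σ i) 1 : Fin p → ℝ)‖ ≤ 1 := by
      apply pi_norm_le_iff_of_nonneg zero_le_one |>.2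
      intro b; rw [Pi.single_apply]; split_ifs <;> simp
    calc ‖v‖ ≤ ‖(Pi.single (σ j) 1 : Fin p → ℝ)‖ + ‖(Pi.single (σ i) 1 : Fin p → ℝ)‖ :=
      norm_sub_le _ _
    _ ≤ 2 := by linarith
  set y : Fin p → ℝ := x + (ε/4) • v with hy
  have hymem : y ∈ Cset p σ := by
    apply hball
    rw [Metric.mem_ball, dist_eq_norm]
    have : y - x = (ε/4) • v := by rw [hy]; abel
    rw [this, norm_smul]
    have : ‖(ε/4 : ℝ)‖ = ε/4 := by rw [Real.norm_eq_abs, abs_of_pos (by linarith)]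
    rw [this]
    nlinarith
  have hne : σ j ≠ σ i := fun h => absurd (σ.injective h) (ne_of_gt hij)
  have hyj : y (σ j) = x (σ j) + ε/4 := by
    simp [hy, hv, Pi.single_apply, hne]
  have hyi : y (σ i) = x (σ i) - ε/4 := by
    simp [hy, hv, Pi.single_apply, hne.symm]
    ring
  have := hymem i j hij.le
  rw [hyj, hyi] at this
  linarith

lemma perm_apply_inv_self' {α : Type*} (f : Equiv.Perm α) (x : α) : f (f⁻¹ x) = x :=
  f.apply_symm_apply x

/-- Distinct simplices `K_σ`, `K_τ` of the standard simplicial decomposition of the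
cube have disjoint topological interiors. -/
theorem Ksimp_interior_disjoint (p : ℕ) (hp : 1 ≤ p) (σ τ : Equiv.Perm (Fin p))
    (hστ : σ ≠ τ) :
    Disjoint (interior (Ksimp p σ)) (interior (Ksimp p τ)) := by
  rw [Set.disjoint_left]
  intro x hxσ hxτ
  have hxσ' : x ∈ interior (Cset p σ) := interior_mono (Ksimp_subset_Cset p σ) hxσ
  have hxτ' : x ∈ interior (Cset p τ) := interior_mono (Ksimp_subset_Cset p τ) hxτ
  -- find minimal k with σ k ≠ τ k
  have hne : ∃ k : Fin p, σ k ≠ τ k := by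
    by_contra h
    push_neg at h
    exact hστ (Equiv.ext h)
  set S := Finset.univ.filter fun k : Fin p => σ k ≠ τ k with hS
  have hSne : S.Nonempty := by
    obtain ⟨k, hk⟩ := hne
    exact ⟨k, by simp [hS, hk]⟩
  set k := S.min' hSne with hk
  have hkmem : σ k ≠ τ k := by
    have := S.min'_mem hSne
    simpa [hS] using this
  have hmin : ∀ j : Fin p, j < k → σ j = τ j := by
    intro j hj
    by_contra h
    exact absurd (S.min'_le j (by simp [hS, h])) (not_le.mpr hj)
  set a := σ k with ha
  set b := τ k with hb
  -- σ⁻¹ b > k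
  have h1 : k < σ⁻¹ b := by
    rcases lt_trichotomy (σ⁻¹ b) k with h | h | h
    · have h3 : σ (σ⁻¹ b) = τ (σ⁻¹ b) := hmin _ h
      rw [perm_apply_inv_self'] at h3
      have h4 : σ⁻¹ b = k := τ.injective (by rw [← h3, hb])
      exact absurd h4 (ne_of_lt h)
    · exact absurd (show a = b by rw [ha, ← h, perm_apply_inv_self']) hkmem
    · exact h
  have h2 : k < τ⁻¹ a := by
    rcases lt_trichotomy (τ⁻¹ a) k with h | h | h
    · have h3 : τ (τ⁻¹ a) = σ (τ⁻¹ a) := (hmin _ h).symm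
      rw [perm_apply_inv_self'] at h3
      have h4 : τ⁻¹ a = k := σ.injective (by rw [← h3, ha])
      exact absurd h4 (ne_of_lt h)
    · exact absurd (show b = a by rw [hb, ← h, perm_apply_inv_self']) hkmem.symm
    · exact h
  have e1 : x b < x a := by
    have := interior_Cset_strict hxσ' h1
    simpa only [perm_apply_inv_self'] using this
  have e2 : x a < x b := by
    have := interior_Cset_strict hxτ' h2
    simpa only [perm_apply_inv_self'] using this
  linarith
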